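/- Let q ≥ 4 be a prime power. Deleting from the incidence matrix of C2(q) the first row and the q columns corresponding to blocks through the first point yields an optimal (q-1)-uniform CBC C3(q) with n = q²-3, N = (q-1)(q²-3), k = m = q²-q-1, which attains the bound n(m,c,k) ≤ ⌊(k-1)·C(m,c)/C(k-1,c)⌋ with equality. -/

import Mathlib

private lemma two_mul_choose_two (m : ℕ) : 2 * m.choose 2 = m * (m - 1) := by
  rcases m with _ | m
  · simp
  · rw [Nat.choose_two_right]
    have he : Even ((m+1) * m) := by rw [Nat.mul_comm]; exact Nat.even_mul_succ_self m
    simpa using Nat.mul_div_cancel' he.two_dvd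

private lemma sum_swap_filter {α : Type} [DecidableEq α] (S P : Finset (Finset α)) :
    ∑ X ∈ S, (P.filter (· ⊆ X)).card = ∑ p ∈ P, (S.filter (p ⊆ ·)).card := by
  simp only [Finset.card_filter]
  exact Finset.sum_comm

private lemma card_filter_Icc_val (N a b : ℕ) (hb : b < N) :
    (Finset.univ.filter (fun x : Fin N => a ≤ x.val ∧ x.val ≤ b)).card = b + 1 - a := by
  rw [← Nat.card_Icc]
  apply Finset.card_bij (fun x _ => x.val)
  · intro x hx
    simp only [Finset.mem_filter] at hx
    simp [Finset.mem_Icc, hx.2.1, hx.2.2]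
  · intro x _ y _ h
    exact Fin.val_injective h
  · intro c hc
    simp only [Finset.mem_Icc] at hc
    exact ⟨⟨c, lt_of_le_of_lt hc.2 hb⟩, by simp [hc.1, hc.2], rfl⟩

private lemma choose_ratio (k c : ℕ) (h1 : 1 ≤ c) (h2 : c + 1 ≤ k) :
    (k - c) * k.choose c = k * ((k - 1).choose c) := by
  obtain ⟨k', rfl⟩ : ∃ k', k = k' + 1 := ⟨k - 1, by omega⟩
  obtain ⟨c', rfl⟩ : ∃ c', c = c' + 1 := ⟨c - 1, by omega⟩
  simp only [Nat.add_sub_cancel]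
  have e1 : (k' + 1).choose (c' + 1) = k'.choose c' + k'.choose (c' + 1) :=
    Nat.choose_succ_succ _ _
  have e2 : (k' + 1) * k'.choose c' = (c' + 1) * ((k' + 1).choose (c' + 1)) := by
    have h := Nat.add_one_mul_choose_eq k' c'
    rw [h, Nat.mul_comm]
  have e3 : (k' + 1 - (c' + 1)) * ((k' + 1).choose (c' + 1))
      = (k' + 1) * ((k' + 1).choose (c' + 1)) - (c' + 1) * ((k' + 1).choose (c' + 1)) :=
    Nat.sub_mul _ _ _
  have e4 : (k' + 1) * ((k' + 1).choose (c' + 1))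
      = (k' + 1) * (k'.choose c') + (k' + 1) * (k'.choose (c' + 1)) := by
    rw [e1, Nat.mul_add]
  omega

private lemma c6_lemma (q : ℕ) (hq : 4 ≤ q) :
    ⌊((q : ℚ) ^ 2 - q - 2) * ((q ^ 2 - q - 1).choose (q - 1) : ℚ) /
        ((q ^ 2 - q - 2).choose (q - 1) : ℚ)⌋ = (q : ℤ) ^ 2 - 3 := by
  have hq2 : q ^ 2 = q * q := sq q
  have hqq5 : 2 * q + 2 ≤ q * q := by nlinarith
  set k := q ^ 2 - q - 1 with hk
  set c := q - 1 with hc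
  rw [show q ^ 2 - q - 2 = k - 1 from by omega]
  have hkval : k + q + 1 = q ^ 2 := by omega
  have hck : c + 1 ≤ k := by omega
  have hid : (k - c) * k.choose c = k * ((k - 1).choose c) :=
    choose_ratio k c (by omega) hck
  have hDpos : 0 < (k - 1).choose c := Nat.choose_pos (by omega)
  have hQ4 : (4 : ℚ) ≤ (q : ℚ) := by exact_mod_cast hq
  have hkQ : ((k : ℚ)) = (q : ℚ) ^ 2 - q - 1 := by
    have h := hkval
    have : ((k : ℚ)) + q + 1 = ((q : ℚ)) ^ 2 := by exact_mod_cast congrArg (Nat.cast (R := ℚ)) h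
    linarith
  have hcQ : ((c : ℚ)) = (q : ℚ) - 1 := by
    have : ((c : ℚ)) + 1 = (q : ℚ) := by exact_mod_cast (show c + 1 = q from by omega)
    linarith
  have hidQ : ((k : ℚ) - c) * (k.choose c : ℚ) = (k : ℚ) * (((k - 1).choose c : ℕ) : ℚ) := by
    have h := congrArg (Nat.cast (R := ℚ)) hid
    push_cast [Nat.cast_sub (show c ≤ k from by omega)] at h
    exact h
  have hDQ : (0 : ℚ) < (((k - 1).choose c : ℕ) : ℚ) := by exact_mod_cast hDpos
  have hkcQ : (0 : ℚ) < (k : ℚ) - c := by rw [hkQ, hcQ]; nlinarith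
  have hfrac : ((k.choose c : ℕ) : ℚ) / (((k - 1).choose c : ℕ) : ℚ)
      = (k : ℚ) / ((k : ℚ) - c) := by
    rw [div_eq_div_iff (ne_of_gt hDQ) (ne_of_gt hkcQ)]
    nlinarith [hidQ]
  rw [mul_div_assoc, hfrac]
  rw [Int.floor_eq_iff]
  constructor
  · rw [← mul_div_assoc, le_div_iff₀ hkcQ]
    push_cast
    rw [hkQ, hcQ]
    nlinarith [hQ4, mul_nonneg (show (0:ℚ) ≤ (q:ℚ) - 1 from by linarith)
      (show (0:ℚ) ≤ (q:ℚ) - 2 from by linarith)]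
  · rw [← mul_div_assoc, div_lt_iff₀ hkcQ]
    push_cast
    rw [hkQ, hcQ]
    nlinarith [hQ4]

private lemma final_arith {q d : ℤ} (hq : 4 ≤ q) (hd0 : 0 ≤ d) (hd : d ≤ 2*q - 6)
    (hN : 2*((d+1)*(q-1)) ≤ 2*(q-2+d)+(d+1)*d) : False := by
  nlinarith [mul_le_mul_of_nonneg_right (show d+1 ≤ 2*q-5 by linarith) hd0]

private lemma idx_eq_of {q i j v : ℕ} (h1 : j * q ≤ v) (h2 : v < (j+1) * q)
    (h3 : i * q ≤ v) (h4 : v < (i+1) * q) : i = j := by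
  have ha : i < j + 1 := lt_of_mul_lt_mul_right (lt_of_le_of_lt h3 h2) (Nat.zero_le q)
  have hb : j < i + 1 := lt_of_mul_lt_mul_right (lt_of_le_of_lt h1 h4) (Nat.zero_le q)
  omega

structure TD (α : Type) [DecidableEq α] [Fintype α] (ℓ h : ℕ) where
  groups : Finset (Finset α)
  blocks : Finset (Finset α)
  card_points : Fintype.card α = ℓ * h
  groups_card : groups.card = ℓ
  group_size : ∀ G ∈ groups, G.card = h
  groups_partition : ∀ x : α, ∃! G, G ∈ groups ∧ x ∈ G
  block_size : ∀ B ∈ blocks, B.card = ℓ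
  block_meets_group : ∀ B ∈ blocks, ∀ G ∈ groups, (B ∩ G).card = 1
  pair_unique : ∀ x y : α, x ≠ y → (∀ G ∈ groups, ¬(x ∈ G ∧ y ∈ G)) →
    ∃! B, B ∈ blocks ∧ x ∈ B ∧ y ∈ B

structure RTD (α : Type) [DecidableEq α] [Fintype α] (ℓ h : ℕ) extends TD α ℓ h where
  classes : Finset (Finset (Finset α))
  classes_card : classes.card = h
  class_sub : ∀ C ∈ classes, C ⊆ blocks
  class_card : ∀ C ∈ classes, C.card = h
  class_cover : ∀ C ∈ classes, ∀ x : α, ∃! B, B ∈ C ∧ x ∈ B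
  block_class : ∀ B ∈ blocks, ∃! C, C ∈ classes ∧ B ∈ C

theorem stmt_18 (q : ℕ) (hq : 4 ≤ q) (hpp : IsPrimePow q)
    (D : RTD (Fin (q * (q - 1))) (q - 1) q)
    (hgroups : ∀ i < q - 1,
      (Finset.univ.filter
        (fun x : Fin (q * (q - 1)) => i * q ≤ x.val ∧ x.val < (i + 1) * q)) ∈ D.groups) :
    let p0 : Fin (q * (q - 1)) := ⟨0, Nat.mul_pos (by omega) (by omega)⟩
    let E : ℕ → Finset (Fin (q * (q - 1))) := fun i =>
      Finset.univ.filter (fun x => (i - 1) * q + 1 ≤ x.val ∧ x.val ≤ i * q - 1)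
    let Items2 := D.blocks ∪ (Finset.Icc 1 (q - 3)).image E
    let Items3 := Items2.filter (fun X => p0 ∉ X)
    Items3.card = q ^ 2 - 3 ∧
    (∀ X ∈ Items3, X.card = q - 1) ∧
    (∑ X ∈ Items3, X.card) = (q - 1) * (q ^ 2 - 3) ∧
    (Finset.univ.erase p0).card = q ^ 2 - q - 1 ∧
    (∀ R ⊆ Items3, R.card ≤ q ^ 2 - q - 1 → R.card ≤ (R.biUnion id).card) ∧
    ⌊((q : ℚ) ^ 2 - q - 2) * ((q ^ 2 - q - 1).choose (q - 1) : ℚ) /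
        ((q ^ 2 - q - 2).choose (q - 1) : ℚ)⌋ = (q : ℤ) ^ 2 - 3 := by
  intro p0 E Items2 Items3
  have hqpos : 0 < q := by omega
  have hq2 : q ^ 2 = q * q := sq q
  have hqq : q + 3 ≤ q * q := by nlinarith
  have hqq4 : 4 * q ≤ q * q := by nlinarith
  have hmul : q * (q - 1) = q * q - q := by
    obtain ⟨a, rfl⟩ : ∃ a, q = a + 1 := ⟨q - 1, by omega⟩
    simp only [Nat.add_sub_cancel]
    apply Nat.eq_sub_of_add_eq; ring
  -- group characterization
  have hGrp : ∀ G ∈ D.groups, ∃ i < q - 1, G = Finset.univ.filter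
      (fun x : Fin (q * (q - 1)) => i * q ≤ x.val ∧ x.val < (i + 1) * q) := by
    set f : ℕ → Finset (Fin (q * (q - 1))) := fun i => Finset.univ.filter
      (fun x : Fin (q * (q - 1)) => i * q ≤ x.val ∧ x.val < (i + 1) * q) with hf
    have himg : (Finset.range (q - 1)).image f ⊆ D.groups := by
      intro G hG
      obtain ⟨i, hi, rfl⟩ := Finset.mem_image.mp hG
      exact hgroups i (Finset.mem_range.mp hi)
    have hinj : Set.InjOn f (Finset.range (q - 1)) := by
      intro i hi j hj h
      simp only [Finset.coe_range, Set.mem_Iio] at hi hj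
      have hvi : i * q < q * (q - 1) := by
        rw [Nat.mul_comm q (q - 1)]
        exact mul_lt_mul_of_pos_right hi hqpos
      have hxi : (⟨i * q, hvi⟩ : Fin (q * (q - 1))) ∈ f i := by
        simp only [hf, Finset.mem_filter, Finset.mem_univ, true_and]
        refine ⟨le_rfl, ?_⟩
        show i * q < (i + 1) * q
        have : (i + 1) * q = i * q + q := by ring
        omega
      rw [h] at hxi
      simp only [hf, Finset.mem_filter, Finset.mem_univ, true_and] at hxi
      have h1 : j * q ≤ i * q := hxi.1
      have h2 : i * q < (j + 1) * q := hxi.2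
      refine idx_eq_of h1 h2 le_rfl ?_
      have : (i + 1) * q = i * q + q := by ring
      omega
    have heq : (Finset.range (q - 1)).image f = D.groups :=
      Finset.eq_of_subset_of_card_le himg
        (by rw [Finset.card_image_of_injOn hinj, Finset.card_range, D.groups_card])
    intro G hG
    rw [← heq] at hG
    obtain ⟨i, hi, rfl⟩ := Finset.mem_image.mp hG
    exact ⟨i, Finset.mem_range.mp hi, rfl⟩
  -- same-interval points share no block
  have hnoblk : ∀ i < q - 1, ∀ x y : Fin (q * (q - 1)), x ≠ y →
      (i * q ≤ x.val ∧ x.val < (i + 1) * q) → (i * q ≤ y.val ∧ y.val < (i + 1) * q) →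
      ∀ B ∈ D.blocks, ¬(x ∈ B ∧ y ∈ B) := by
    intro i hi x y hxy hx hy B hB hmem
    have hcard := D.block_meets_group B hB _ (hgroups i hi)
    have hsub : ({x, y} : Finset (Fin (q * (q - 1)))) ⊆ B ∩ (Finset.univ.filter
        (fun z : Fin (q * (q - 1)) => i * q ≤ z.val ∧ z.val < (i + 1) * q)) := by
      intro z hz
      rcases Finset.mem_insert.mp hz with rfl | hz
      · exact Finset.mem_inter.mpr ⟨hmem.1,
          by simp only [Finset.mem_filter, Finset.mem_univ, true_and]; exact hx⟩
      · rw [Finset.mem_singleton.mp hz]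
        exact Finset.mem_inter.mpr ⟨hmem.2,
          by simp only [Finset.mem_filter, Finset.mem_univ, true_and]; exact hy⟩
    have h2 : 2 ≤ (B ∩ (Finset.univ.filter
        (fun z : Fin (q * (q - 1)) => i * q ≤ z.val ∧ z.val < (i + 1) * q))).card := by
      calc 2 = ({x, y} : Finset (Fin (q * (q - 1)))).card := (Finset.card_pair hxy).symm
      _ ≤ _ := Finset.card_le_card hsub
    omega
  -- block codegree ≤ 1
  have codegB : ∀ x y : Fin (q * (q - 1)), x ≠ y → ∀ B ∈ D.blocks, ∀ B' ∈ D.blocks,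
      x ∈ B → y ∈ B → x ∈ B' → y ∈ B' → B = B' := by
    intro x y hxy B hB B' hB' hxB hyB hxB' hyB'
    by_cases hsg : ∃ i < q - 1,
        (i * q ≤ x.val ∧ x.val < (i + 1) * q) ∧ (i * q ≤ y.val ∧ y.val < (i + 1) * q)
    · obtain ⟨i, hi, hx, hy⟩ := hsg
      exact absurd ⟨hxB, hyB⟩ (hnoblk i hi x y hxy hx hy B hB)
    · have hng : ∀ G ∈ D.groups, ¬(x ∈ G ∧ y ∈ G) := by
        intro G hG hmem
        obtain ⟨i, hi, rfl⟩ := hGrp G hG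
        simp only [Finset.mem_filter, Finset.mem_univ, true_and] at hmem
        exact hsg ⟨i, hi, hmem.1, hmem.2⟩
      obtain ⟨B0, _, hu⟩ := D.pair_unique x y hxy hng
      rw [hu B ⟨hB, hxB, hyB⟩, hu B' ⟨hB', hxB', hyB'⟩]
  -- block degree = q
  have hCdisj : ∀ C ∈ D.classes, ∀ C' ∈ D.classes, C ≠ C' → Disjoint (id C) (id C') := by
    intro C hC C' hC' hne
    rw [Finset.disjoint_left]
    intro B hBC hBC'
    obtain ⟨C0, _, hu⟩ := D.block_class B (D.class_sub C hC hBC)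
    exact hne ((hu C ⟨hC, hBC⟩).trans (hu C' ⟨hC', hBC'⟩).symm)
  have hBeq : D.blocks = D.classes.biUnion id := by
    ext B
    simp only [Finset.mem_biUnion, id]
    constructor
    · intro hB
      obtain ⟨C, hC, _⟩ := D.block_class B hB
      exact ⟨C, hC.1, hC.2⟩
    · rintro ⟨C, hC, hBC⟩
      exact D.class_sub C hC hBC
  have hdegB : ∀ x : Fin (q * (q - 1)), (D.blocks.filter (fun B => x ∈ B)).card = q := by
    intro x
    have hone : ∀ C ∈ D.classes, ((id C).filter (fun B => x ∈ B)).card = 1 := by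
      intro C hC
      obtain ⟨B0, hB0, hu⟩ := D.class_cover C hC x
      rw [Finset.card_eq_one]
      refine ⟨B0, ?_⟩
      ext B'
      simp only [Finset.mem_filter, Finset.mem_singleton, id]
      constructor
      · intro h; exact hu B' h
      · rintro rfl; exact hB0
    rw [hBeq, Finset.filter_biUnion, Finset.card_biUnion
      (fun C hC C' hC' hne => Finset.disjoint_filter_filter (hCdisj C hC C' hC' hne))]
    rw [Finset.sum_congr rfl hone, Finset.sum_const, smul_eq_mul, D.classes_card, Nat.mul_one]
  have hBcard : D.blocks.card = q * q := by
    rw [hBeq, Finset.card_biUnion hCdisj]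
    rw [Finset.sum_congr rfl (fun C hC => (D.class_card C hC : (id C).card = q)),
      Finset.sum_const, smul_eq_mul, D.classes_card]
  have hBno : (D.blocks.filter (fun B => p0 ∉ B)).card = q * q - q := by
    have h1 := hdegB p0
    have h2 := Finset.card_filter_add_card_filter_not
      (s := D.blocks) (p := fun B => p0 ∈ B)
    omega
  -- E facts
  have hEval : ∀ i, ∀ x : Fin (q * (q - 1)), x ∈ E i ↔
      ((i - 1) * q + 1 ≤ x.val ∧ x.val ≤ i * q - 1) := by
    intro i x; simp [E]
  have hEbounds : ∀ i, 1 ≤ i → i ≤ q - 3 →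
      i * q = (i - 1) * q + q ∧ i * q ≤ (q - 3) * q ∧ (q - 3) * q < q * (q - 1) := by
    intro i h1 h3
    refine ⟨?_, Nat.mul_le_mul h3 le_rfl, ?_⟩
    · obtain ⟨a, rfl⟩ : ∃ a, i = a + 1 := ⟨i - 1, by omega⟩
      simp [Nat.add_mul]
    · rw [Nat.mul_comm q (q - 1)]
      exact mul_lt_mul_of_pos_right (by omega) hqpos
  have hEp0 : ∀ i ∈ Finset.Icc 1 (q - 3), p0 ∉ E i := by
    intro i hi h
    simp only [Finset.mem_Icc] at hi
    have := (hEval i p0).mp h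
    simp only [show p0.val = 0 from rfl] at this
    omega
  have hEcard : ∀ i ∈ Finset.Icc 1 (q - 3), (E i).card = q - 1 := by
    intro i hi
    simp only [Finset.mem_Icc] at hi
    obtain ⟨e1, e2, e3⟩ := hEbounds i hi.1 hi.2
    show (Finset.univ.filter _).card = q - 1
    rw [card_filter_Icc_val _ _ _ (by omega)]
    omega
  have hEdisj : ∀ i, 1 ≤ i → i ≤ q - 3 → ∀ j, 1 ≤ j → j ≤ q - 3 →
      ∀ x : Fin (q * (q - 1)), x ∈ E i → x ∈ E j → i = j := by
    intro i hi1 hi2 j hj1 hj2 x hxi hxj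
    obtain ⟨ei, _, _⟩ := hEbounds i hi1 hi2
    obtain ⟨ej, _, _⟩ := hEbounds j hj1 hj2
    have h1 := (hEval i x).mp hxi
    have h2 := (hEval j x).mp hxj
    have : i - 1 = j - 1 := by
      apply idx_eq_of (q := q) (v := x.val)
      · omega
      · have : (j - 1 + 1) * q = j * q := by
          congr 1; omega
        omega
      · omega
      · have : (i - 1 + 1) * q = i * q := by
          congr 1; omega
        omega
    omega
  have hEgrp : ∀ i, 1 ≤ i → i ≤ q - 3 → ∀ x : Fin (q * (q - 1)), x ∈ E i →
      (i - 1) * q ≤ x.val ∧ x.val < (i - 1 + 1) * q := by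
    intro i hi1 hi2 x hx
    obtain ⟨ei, _, _⟩ := hEbounds i hi1 hi2
    have h1 := (hEval i x).mp hx
    have : (i - 1 + 1) * q = i * q := by congr 1; omega
    omega
  have noblkE : ∀ i ∈ Finset.Icc 1 (q - 3), ∀ x y : Fin (q * (q - 1)), x ≠ y →
      x ∈ E i → y ∈ E i → ∀ B ∈ D.blocks, ¬(x ∈ B ∧ y ∈ B) := by
    intro i hi x y hxy hx hy B hB
    simp only [Finset.mem_Icc] at hi
    exact hnoblk (i - 1) (by omega) x y hxy (hEgrp i hi.1 hi.2 x hx) (hEgrp i hi.1 hi.2 y hy) B hB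
  have hEnotB : ∀ i ∈ Finset.Icc 1 (q - 3), E i ∉ D.blocks := by
    intro i hi hmem
    simp only [Finset.mem_Icc] at hi
    obtain ⟨e1, e2, e3⟩ := hEbounds i hi.1 hi.2
    have hb1 : (i - 1) * q + 1 < q * (q - 1) := by omega
    have hb2 : (i - 1) * q + 2 < q * (q - 1) := by omega
    have hx1 : (⟨(i - 1) * q + 1, hb1⟩ : Fin (q * (q - 1))) ∈ E i := by
      rw [hEval]
      exact ⟨le_rfl, by show (i - 1) * q + 1 ≤ i * q - 1; omega⟩
    have hx2 : (⟨(i - 1) * q + 2, hb2⟩ : Fin (q * (q - 1))) ∈ E i := by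
      rw [hEval]
      refine ⟨?_, ?_⟩
      · show (i - 1) * q + 1 ≤ (i - 1) * q + 2; omega
      · show (i - 1) * q + 2 ≤ i * q - 1; omega
    have hne : (⟨(i - 1) * q + 1, hb1⟩ : Fin (q * (q - 1))) ≠ ⟨(i - 1) * q + 2, hb2⟩ := by
      intro h
      simp only [Fin.mk.injEq] at h
      omega
    exact noblkE i (Finset.mem_Icc.mpr (by omega)) _ _ hne hx1 hx2 (E i) hmem ⟨hx1, hx2⟩
  -- decomposition of Items3
  have hIt3 : Items3 = D.blocks.filter (fun B => p0 ∉ B) ∪ (Finset.Icc 1 (q - 3)).image E := by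
    show (D.blocks ∪ _).filter _ = _
    rw [Finset.filter_union]
    congr 1
    apply Finset.filter_true_of_mem
    intro X hX
    obtain ⟨i, hi, rfl⟩ := Finset.mem_image.mp hX
    exact hEp0 i hi
  have himgcard : ((Finset.Icc 1 (q - 3)).image E).card = q - 3 := by
    rw [Finset.card_image_of_injOn, Nat.card_Icc]
    · omega
    · intro i hi j hj h
      simp only [Finset.coe_Icc, Set.mem_Icc] at hi hj
      have hne : (E i).Nonempty := by
        rw [← Finset.card_pos, hEcard i (by simp [Finset.mem_Icc]; omega)]; omega
      obtain ⟨x, hx⟩ := hne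
      exact hEdisj i hi.1 hi.2 j hj.1 hj.2 x hx (h ▸ hx)
  have hdisjBE : Disjoint (D.blocks.filter (fun B => p0 ∉ B)) ((Finset.Icc 1 (q - 3)).image E) := by
    rw [Finset.disjoint_left]
    intro X hX hX2
    obtain ⟨i, hi, rfl⟩ := Finset.mem_image.mp hX2
    exact hEnotB i hi (Finset.mem_filter.mp hX).1
  have c1 : Items3.card = q ^ 2 - 3 := by
    rw [hIt3, Finset.card_union_of_disjoint hdisjBE, hBno, himgcard]
    omega
  have c2 : ∀ X ∈ Items3, X.card = q - 1 := by
    intro X hX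
    rw [hIt3] at hX
    rcases Finset.mem_union.mp hX with h | h
    · exact D.block_size X (Finset.mem_filter.mp h).1
    · obtain ⟨i, hi, rfl⟩ := Finset.mem_image.mp h
      exact hEcard i hi
  have c3 : (∑ X ∈ Items3, X.card) = (q - 1) * (q ^ 2 - 3) := by
    calc (∑ X ∈ Items3, X.card) = ∑ _X ∈ Items3, (q - 1) := Finset.sum_congr rfl c2
    _ = Items3.card * (q - 1) := by rw [Finset.sum_const, smul_eq_mul]
    _ = (q - 1) * (q ^ 2 - 3) := by rw [c1, Nat.mul_comm]
  have c4 : (Finset.univ.erase p0).card = q ^ 2 - q - 1 := by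
    rw [Finset.card_erase_of_mem (Finset.mem_univ _), Finset.card_univ, Fintype.card_fin]
    omega
  -- degree and codegree in Items3
  have hp0I : ∀ X ∈ Items3, p0 ∉ X := by
    intro X hX
    rw [hIt3] at hX
    rcases Finset.mem_union.mp hX with h | h
    · exact (Finset.mem_filter.mp h).2
    · obtain ⟨i, hi, rfl⟩ := Finset.mem_image.mp h
      exact hEp0 i hi
  have hdeg : ∀ x : Fin (q * (q - 1)), x ≠ p0 →
      q - 1 ≤ (Items3.filter (fun X => x ∈ X)).card := by
    intro x hx
    have hsplit := Finset.card_filter_add_card_filter_not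
      (s := D.blocks.filter (fun B => x ∈ B)) (p := fun B => p0 ∈ B)
    have hle1 : ((D.blocks.filter (fun B => x ∈ B)).filter (fun B => p0 ∈ B)).card ≤ 1 := by
      rw [Finset.card_le_one]
      intro B hB B' hB'
      simp only [Finset.mem_filter] at hB hB'
      exact codegB x p0 hx B hB.1.1 B' hB'.1.1 hB.1.2 hB.2 hB'.1.2 hB'.2
    have hsub : (D.blocks.filter (fun B => x ∈ B)).filter (fun B => ¬ p0 ∈ B) ⊆
        Items3.filter (fun X => x ∈ X) := by
      intro B hB
      simp only [Finset.mem_filter] at hB ⊢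
      refine ⟨?_, hB.1.2⟩
      rw [hIt3]
      exact Finset.mem_union_left _ (Finset.mem_filter.mpr ⟨hB.1.1, hB.2⟩)
    have hcc := Finset.card_le_card hsub
    have hdx := hdegB x
    omega
  have hcodegI : ∀ x y : Fin (q * (q - 1)), x ≠ y →
      (Items3.filter (fun X => x ∈ X ∧ y ∈ X)).card ≤ 1 := by
    intro x y hxy
    rw [Finset.card_le_one]
    intro X hX Y hY
    simp only [Finset.mem_filter] at hX hY
    have hX3 := hX.1
    have hY3 := hY.1
    rw [hIt3] at hX3 hY3
    rcases Finset.mem_union.mp hX3 with hXb | hXe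
    · rcases Finset.mem_union.mp hY3 with hYb | hYe
      · exact codegB x y hxy X (Finset.mem_filter.mp hXb).1 Y (Finset.mem_filter.mp hYb).1
          hX.2.1 hX.2.2 hY.2.1 hY.2.2
      · exfalso
        obtain ⟨j, hj, rfl⟩ := Finset.mem_image.mp hYe
        exact noblkE j hj x y hxy hY.2.1 hY.2.2 X (Finset.mem_filter.mp hXb).1 ⟨hX.2.1, hX.2.2⟩
    · obtain ⟨i, hi, rfl⟩ := Finset.mem_image.mp hXe
      rcases Finset.mem_union.mp hY3 with hYb | hYe
      · exfalso
        exact noblkE i hi x y hxy hX.2.1 hX.2.2 Y (Finset.mem_filter.mp hYb).1 ⟨hY.2.1, hY.2.2⟩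
      · obtain ⟨j, hj, rfl⟩ := Finset.mem_image.mp hYe
        simp only [Finset.mem_Icc] at hi hj
        rw [hEdisj i hi.1 hi.2 j hj.1 hj.2 x hX.2.1 hY.2.1]
  have hpairbound : ∀ S : Finset (Finset (Fin (q * (q - 1)))), S ⊆ Items3 →
      ∀ T : Finset (Fin (q * (q - 1))), ∀ p ∈ T.powersetCard 2,
      (S.filter (p ⊆ ·)).card ≤ 1 := by
    intro S hS T p hp
    obtain ⟨hpT, hp2⟩ := Finset.mem_powersetCard.mp hp
    obtain ⟨x, y, hxy, rfl⟩ := Finset.card_eq_two.mp hp2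
    refine le_trans (Finset.card_le_card ?_) (hcodegI x y hxy)
    intro X hX
    simp only [Finset.mem_filter] at hX ⊢
    have hsub := hX.2
    rw [Finset.insert_subset_iff, Finset.singleton_subset_iff] at hsub
    exact ⟨hS hX.1, hsub.1, hsub.2⟩
  have c5 : ∀ R ⊆ Items3, R.card ≤ q ^ 2 - q - 1 → R.card ≤ (R.biUnion id).card := by
    intro R hR hRcard
    by_contra hcon
    push_neg at hcon
    set U := R.biUnion id with hU
    have hXU : ∀ X ∈ R, X ⊆ U := fun X hX => Finset.subset_biUnion_of_mem id hX
    have hXcard : ∀ X ∈ R, X.card = q - 1 := fun X hX => c2 X (hR hX)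
    by_cases hcase : R.card ≤ (q - 1) * (q - 2) + 2
    · -- pair counting case
      have key : R.card * ((q - 1).choose 2) ≤ U.card.choose 2 := by
        have h1 : ∀ X ∈ R, ((U.powersetCard 2).filter (· ⊆ X)).card = (q - 1).choose 2 := by
          intro X hX
          have heq : (U.powersetCard 2).filter (· ⊆ X) = X.powersetCard 2 := by
            ext p
            simp only [Finset.mem_filter, Finset.mem_powersetCard]
            constructor
            · rintro ⟨⟨_, h2⟩, h3⟩; exact ⟨h3, h2⟩
            · rintro ⟨h1, h2⟩; exact ⟨⟨h1.trans (hXU X hX), h2⟩, h1⟩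
          rw [heq, Finset.card_powersetCard, hXcard X hX]
        calc R.card * ((q - 1).choose 2)
            = ∑ X ∈ R, ((U.powersetCard 2).filter (· ⊆ X)).card := by
              rw [Finset.sum_congr rfl h1, Finset.sum_const, smul_eq_mul]
          _ = ∑ p ∈ U.powersetCard 2, (R.filter (p ⊆ ·)).card := sum_swap_filter R _
          _ ≤ ∑ _p ∈ U.powersetCard 2, 1 :=
              Finset.sum_le_sum (fun p hp => hpairbound R hR U p hp)
          _ = (U.powersetCard 2).card := by rw [Finset.sum_const, smul_eq_mul, Nat.mul_one]
          _ = U.card.choose 2 := Finset.card_powersetCard 2 U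
      have h2 : U.card.choose 2 ≤ (R.card - 1).choose 2 := Nat.choose_le_choose 2 (by omega)
      have e1 : 2 * ((q - 1).choose 2) = (q - 1) * (q - 2) := by
        rw [two_mul_choose_two]; congr 1
      have e2 : 2 * ((R.card - 1).choose 2) = (R.card - 1) * (R.card - 2) := by
        rw [two_mul_choose_two]; congr 1
      have hA : R.card * ((q - 1) * (q - 2)) ≤ (R.card - 1) * (R.card - 2) := by
        calc R.card * ((q - 1) * (q - 2)) = 2 * (R.card * ((q - 1).choose 2)) := by
              rw [← e1]; ring
          _ ≤ 2 * ((R.card - 1).choose 2) := Nat.mul_le_mul le_rfl (key.trans h2)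
          _ = (R.card - 1) * (R.card - 2) := e2
      have hB2 : (R.card - 1) * (R.card - 2) ≤ (R.card - 1) * ((q - 1) * (q - 2)) :=
        Nat.mul_le_mul le_rfl (by omega)
      have hfin : R.card ≤ R.card - 1 :=
        Nat.le_of_mul_le_mul_right (hA.trans hB2) (Nat.mul_pos (by omega) (by omega))
      omega
    · -- Bonferroni case
      push_neg at hcase
      set d := (q ^ 2 - q - 1) - R.card with hd
      have hprod : (q - 1) * (q - 2) + 3 * q = q * q + 2 := by
        obtain ⟨a, rfl⟩ : ∃ a, q = a + 2 := ⟨q - 2, by omega⟩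
        have h1 : a + 2 - 1 = a + 1 := by omega
        have h2 : a + 2 - 2 = a := by omega
        rw [h1, h2]; ring
      have hd2q : d ≤ 2 * q - 6 := by omega
      have hUsub : U ⊆ Finset.univ.erase p0 := by
        intro x hx
        obtain ⟨X, hXR, hxX⟩ := Finset.mem_biUnion.mp hx
        exact Finset.mem_erase.mpr ⟨fun h => hp0I X (hR hXR) (h ▸ hxX), Finset.mem_univ x⟩
      have hW : ((Finset.univ.erase p0) \ U).card = (q ^ 2 - q - 1) - U.card := by
        rw [Finset.card_sdiff_of_subset hUsub, c4]
      have hdW : d + 1 ≤ ((Finset.univ.erase p0) \ U).card := by omega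
      obtain ⟨T, hTsub, hTcard⟩ := Finset.exists_subset_card_eq hdW
      set S := Items3.filter (fun X => (X ∩ T).Nonempty) with hS
      have hSdisjR : Disjoint S R := by
        rw [Finset.disjoint_right]
        intro X hXR hXS
        obtain ⟨x, hxmem⟩ := (Finset.mem_filter.mp hXS).2
        have hx1 : x ∈ X := (Finset.mem_inter.mp hxmem).1
        have hx2 : x ∈ T := (Finset.mem_inter.mp hxmem).2
        exact (Finset.mem_sdiff.mp (hTsub hx2)).2 (hXU X hXR hx1)
      have hSR : S.card + R.card ≤ q ^ 2 - 3 := by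
        calc S.card + R.card = (S ∪ R).card := (Finset.card_union_of_disjoint hSdisjR).symm
          _ ≤ Items3.card := Finset.card_le_card
              (Finset.union_subset (Finset.filter_subset _ _) hR)
          _ = q ^ 2 - 3 := c1
      have hTp0 : ∀ x ∈ T, x ≠ p0 := fun x hx =>
        Finset.ne_of_mem_erase (Finset.mem_sdiff.mp (hTsub hx)).1
      have hswap : ∑ X ∈ S, (X ∩ T).card
          = ∑ x ∈ T, (Items3.filter (fun X => x ∈ X)).card := by
        have h1 : ∑ X ∈ S, (X ∩ T).card = ∑ X ∈ Items3, (X ∩ T).card := by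
          apply Finset.sum_subset (Finset.filter_subset _ _)
          intro X hX hXS
          rw [Finset.card_eq_zero, ← Finset.not_nonempty_iff_eq_empty]
          intro hne
          exact hXS (Finset.mem_filter.mpr ⟨hX, hne⟩)
        rw [h1]
        have h2 : ∀ X ∈ Items3, (X ∩ T).card = (T.filter (· ∈ X)).card := by
          intro X _
          rw [Finset.filter_mem_eq_inter, Finset.inter_comm]
        rw [Finset.sum_congr rfl h2]
        simp only [Finset.card_filter]
        exact Finset.sum_comm
      have hinc1 : (d + 1) * (q - 1) ≤ ∑ X ∈ S, (X ∩ T).card := by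
        rw [hswap]
        calc (d + 1) * (q - 1) = ∑ _x ∈ T, (q - 1) := by
              rw [Finset.sum_const, hTcard, smul_eq_mul]
          _ ≤ _ := Finset.sum_le_sum (fun x hx => hdeg x (hTp0 x hx))
      have hptle : ∀ X ∈ S, (X ∩ T).card ≤ 1 + (X ∩ T).card.choose 2 := by
        intro X hX
        have hne : (X ∩ T).Nonempty := (Finset.mem_filter.mp hX).2
        have h1 : 1 ≤ (X ∩ T).card := Finset.card_pos.mpr hne
        have h2 := two_mul_choose_two (X ∩ T).card
        rcases Nat.lt_or_ge (X ∩ T).card 2 with h | h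
        · omega
        · have h3 : 2 * ((X ∩ T).card - 1) ≤ (X ∩ T).card * ((X ∩ T).card - 1) :=
            Nat.mul_le_mul h le_rfl
          omega
      have hchoose : ∑ X ∈ S, (X ∩ T).card.choose 2 ≤ (d + 1).choose 2 := by
        have h1 : ∀ X ∈ S, (X ∩ T).card.choose 2
            = ((T.powersetCard 2).filter (· ⊆ X)).card := by
          intro X _
          have heq : (T.powersetCard 2).filter (· ⊆ X) = (X ∩ T).powersetCard 2 := by
            ext p
            simp only [Finset.mem_filter, Finset.mem_powersetCard, Finset.subset_inter_iff]
            tauto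
          rw [heq, Finset.card_powersetCard]
        rw [Finset.sum_congr rfl h1, sum_swap_filter]
        calc ∑ p ∈ T.powersetCard 2, (S.filter (p ⊆ ·)).card
            ≤ ∑ _p ∈ T.powersetCard 2, 1 :=
              Finset.sum_le_sum (fun p hp => hpairbound S (Finset.filter_subset _ _) T p hp)
          _ = (T.powersetCard 2).card := by rw [Finset.sum_const, smul_eq_mul, Nat.mul_one]
          _ = (d + 1).choose 2 := by rw [Finset.card_powersetCard, hTcard]
      have hinc2 : ∑ X ∈ S, (X ∩ T).card ≤ S.card + (d + 1).choose 2 := by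
        calc ∑ X ∈ S, (X ∩ T).card ≤ ∑ X ∈ S, (1 + (X ∩ T).card.choose 2) :=
              Finset.sum_le_sum hptle
          _ = S.card + ∑ X ∈ S, (X ∩ T).card.choose 2 := by
              rw [Finset.sum_add_distrib, Finset.sum_const, smul_eq_mul, Nat.mul_one]
          _ ≤ S.card + (d + 1).choose 2 := add_le_add_right hchoose _
      have e3 : 2 * ((d + 1).choose 2) = (d + 1) * d := by
        rw [two_mul_choose_two]; simp
      have hN : 2 * ((d + 1) * (q - 1)) ≤ 2 * (q - 2 + d) + (d + 1) * d := by
        have h := hinc1.trans hinc2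
        omega
      have hq4z : (4 : ℤ) ≤ (q : ℤ) := by exact_mod_cast hq
      have hdz : (d : ℤ) ≤ 2 * (q : ℤ) - 6 := by
        zify [show 6 ≤ 2 * q from by omega] at hd2q
        exact_mod_cast hd2q
      zify [show 1 ≤ q from by omega, show 2 ≤ q from by omega] at hN
      apply final_arith hq4z (Int.natCast_nonneg d) hdz
      linarith [hN]
  have c6 := c6_lemma q hq
  exact ⟨c1, c2, c3, c4, c5, c6⟩
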